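/- arXiv:2305.07160 — 2 statements merged into one kernel-verified Lean document; each statement's English description precedes it below -/
import Mathlib

section
/- Let T_n = {l ∈ [0,1]ⁿ : l₁ ≥ … ≥ l_n, l₁ + l₂ ≤ 1, and l₁ ≤ l₂ + … + l_n}. Then T_n = DC_n ∩ F_n, where DC_n is the n-demicube and F_n = {l ∈ [0,1]ⁿ : l₁ + l₂ ≤ 1, l₁ ≥ … ≥ l_n}. -/
open Finset

namespace TnAux

variable {n : ℕ}

def EV (n : ℕ) : Set (Fin n → ℝ) :=
  {v | (∀ i, v i = 0 ∨ v i = 1) ∧ ∃ k : ℤ, ∑ i, v i = 2 * (k : ℝ)}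

lemma chi_mem_EV {S : Finset (Fin n)} (h : Even S.card) :
    (fun i => if i ∈ S then (1 : ℝ) else 0) ∈ EV n := by
  constructor
  · intro i; by_cases hi : i ∈ S <;> simp [hi]
  · obtain ⟨k, hk⟩ := h
    refine ⟨k, ?_⟩
    rw [Finset.sum_boole]
    have : Finset.univ.filter (fun i => i ∈ S) = S := by ext i; simp
    rw [this, hk]; push_cast; ring

lemma zero_mem_EV (n : ℕ) : (0 : Fin n → ℝ) ∈ EV n := by
  have := chi_mem_EV (S := (∅ : Finset (Fin n))) (by simp)
  simp at this; exact this

lemma hull_sub_halfspace (hn : 2 ≤ n) :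
    convexHull ℝ (EV n) ⊆
      {x : Fin n → ℝ | x ⟨0, Nat.zero_lt_two.trans_le hn⟩ ≤ ∑ i ∈ univ.erase (⟨0, Nat.zero_lt_two.trans_le hn⟩ : Fin n), x i} := by
  set i0 : Fin n := ⟨0, Nat.zero_lt_two.trans_le hn⟩
  have hlin : IsLinearMap ℝ (fun x : Fin n → ℝ => (∑ i ∈ univ.erase i0, x i) - x i0) := by
    constructor
    · intro x y; simp [Finset.sum_add_distrib]; ring
    · intro c x
      simp only [Pi.smul_apply, smul_eq_mul, Finset.mul_sum, mul_sub]
  have hconv : Convex ℝ {x : Fin n → ℝ | (0:ℝ) ≤ (∑ i ∈ univ.erase i0, x i) - x i0} :=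
    convex_halfSpace_ge hlin 0
  have hsub : EV n ⊆ {x : Fin n → ℝ | (0:ℝ) ≤ (∑ i ∈ univ.erase i0, x i) - x i0} := by
    intro v hv
    obtain ⟨h01, k, hk⟩ := hv
    have hnn : ∀ i, 0 ≤ v i := by intro i; rcases h01 i with h | h <;> simp [h]
    have hsum_nn : 0 ≤ ∑ i ∈ univ.erase i0, v i := Finset.sum_nonneg fun i _ => hnn i
    have hsplit : ∑ i, v i = v i0 + ∑ i ∈ univ.erase i0, v i :=
      (Finset.add_sum_erase univ v (mem_univ i0)).symm
    rcases h01 i0 with h | h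
    · simp only [Set.mem_setOf_eq]; linarith
    · have h2k : (2:ℝ) * k = 1 + ∑ i ∈ univ.erase i0, v i := by rw [← hk, hsplit, h]
      have hkpos : 0 < (k:ℝ) := by linarith
      have hk1 : (1:ℝ) ≤ (k:ℝ) := by exact_mod_cast Int.cast_pos.mp hkpos
      simp only [Set.mem_setOf_eq]; linarith
  intro x hx
  have := convexHull_min hsub hconv hx
  simpa only [Set.mem_setOf_eq, sub_nonneg] using this

lemma caseA (hn : 2 ≤ n) (l : Fin n → ℝ)
    (h0 : ∀ i, 0 ≤ l i) (h1 : l ⟨0, Nat.zero_lt_two.trans_le hn⟩ ≤ 1)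
    (ht : l ⟨0, Nat.zero_lt_two.trans_le hn⟩ = ∑ i ∈ univ.erase (⟨0, Nat.zero_lt_two.trans_le hn⟩ : Fin n), l i) :
    l ∈ convexHull ℝ (EV n) := by
  set i0 : Fin n := ⟨0, Nat.zero_lt_two.trans_le hn⟩ with hi0
  set w : Fin n → ℝ := fun i => if i = i0 then 1 - l i0 else l i with hw
  set z : Fin n → (Fin n → ℝ) :=
    fun i => if i = i0 then 0 else (fun j => if j ∈ ({i0, i} : Finset (Fin n)) then (1:ℝ) else 0)
    with hz
  have hwsum : ∑ i, w i = 1 := by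
    rw [← Finset.add_sum_erase univ w (mem_univ i0)]
    have : ∑ i ∈ univ.erase i0, w i = ∑ i ∈ univ.erase i0, l i := by
      apply Finset.sum_congr rfl
      intro i hi
      simp only [hw, if_neg (Finset.mem_erase.mp hi).1]
    rw [this, ← ht]
    simp [hw]
  have hmem : univ.centerMass w z ∈ convexHull ℝ (EV n) := by
    apply Finset.centerMass_mem_convexHull
    · intro i _
      by_cases h : i = i0 <;> simp [hw, h]
      · linarith
      · exact h0 i
    · rw [hwsum]; norm_num
    · intro i _
      by_cases h : i = i0
      · simp only [hz, if_pos h]; exact zero_mem_EV n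
      · simp only [hz, if_neg h]
        apply chi_mem_EV
        rw [Finset.card_insert_of_notMem (by simp [Ne.symm h]), Finset.card_singleton]
        norm_num
  have hcm : univ.centerMass w z = l := by
    rw [Finset.centerMass_eq_of_sum_1 _ _ hwsum]
    funext j
    rw [Finset.sum_apply]
    rw [← Finset.add_sum_erase univ _ (mem_univ i0)]
    have hz0 : (w i0 • z i0) j = 0 := by simp [hz]
    rw [hz0, zero_add]
    by_cases hj : j = i0
    · have : ∀ i ∈ univ.erase i0, (w i • z i) j = l i := by
        intro i hi
        obtain ⟨hne, -⟩ := Finset.mem_erase.mp hi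
        simp [hw, hz, hne, hj, Ne.symm hne]
      rw [Finset.sum_congr rfl this, ← ht, hj]
    · have : ∀ i ∈ univ.erase i0, (w i • z i) j = if i = j then l j else 0 := by
        intro i hi
        obtain ⟨hne, -⟩ := Finset.mem_erase.mp hi
        by_cases hij : i = j
        · subst hij; simp [hw, hz, hne, hj]
        · simp [hw, hz, hne, hj, Ne.symm hij, hij]
      rw [Finset.sum_congr rfl this, Finset.sum_ite_eq' (univ.erase i0) j (fun _ => l j)]
      simp [Finset.mem_erase, hj]
  rw [← hcm]; exact hmem

lemma EV_finite (n : ℕ) : (EV n).Finite := by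
  have h : EV n ⊆ Set.pi Set.univ (fun _ : Fin n => ({0, 1} : Set ℝ)) := by
    intro v hv i _
    rcases hv.1 i with h | h <;> simp [h]
  exact (Set.Finite.pi (fun _ => by simp)).subset h

lemma avg_apply (I : Finset (Fin n)) (c : ℝ) (S : Fin n → Finset (Fin n)) (j : Fin n) :
    (∑ i ∈ I, c • (fun t => if t ∈ S i then (1:ℝ) else 0)) j
      = c * ((I.filter (fun i => j ∈ S i)).card : ℝ) := by
  rw [Finset.sum_apply]
  simp only [Pi.smul_apply, smul_eq_mul, mul_ite, mul_one, mul_zero]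
  rw [← Finset.sum_filter, Finset.sum_const, nsmul_eq_mul, mul_comm]

lemma avg_mem_hull (I : Finset (Fin n)) (hI : I.Nonempty) (S : Fin n → Finset (Fin n))
    (hS : ∀ i ∈ I, Even (S i).card) :
    (∑ i ∈ I, ((I.card : ℝ))⁻¹ • (fun t => if t ∈ S i then (1:ℝ) else 0))
      ∈ convexHull ℝ (EV n) := by
  have hm : (0:ℝ) < (I.card : ℝ) := by
    exact_mod_cast Finset.card_pos.mpr hI
  have hws : ∑ _i ∈ I, ((I.card : ℝ))⁻¹ = 1 := by
    rw [Finset.sum_const, nsmul_eq_mul, mul_inv_cancel₀ (ne_of_gt hm)]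
  have := Finset.centerMass_mem_convexHull (s := EV n) I
      (w := fun _ => ((I.card : ℝ))⁻¹)
      (fun i _ => by positivity) (by rw [hws]; norm_num)
      (z := fun i => (fun t => if t ∈ S i then (1:ℝ) else 0))
      (fun i hi => chi_mem_EV (hS i hi))
  rwa [Finset.centerMass_eq_of_sum_1 _ _ hws] at this

lemma lemmaQ (hn : 2 ≤ n) (l : Fin n → ℝ) (b : ℝ)
    (hb : 0 < b) (hba : b ≤ l ⟨0, Nat.zero_lt_two.trans_le hn⟩) (hab : l ⟨0, Nat.zero_lt_two.trans_le hn⟩ + b = 1)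
    (hvals : ∀ i : Fin n, i ≠ ⟨0, Nat.zero_lt_two.trans_le hn⟩ → l i = b ∨ l i = 0)
    (hsum : l ⟨0, Nat.zero_lt_two.trans_le hn⟩ ≤ ∑ i ∈ univ.erase (⟨0, Nat.zero_lt_two.trans_le hn⟩ : Fin n), l i) :
    l ∈ convexHull ℝ (EV n) := by
  classical
  set i0 : Fin n := ⟨0, Nat.zero_lt_two.trans_le hn⟩ with hi0def
  set a : ℝ := l i0 with hadef
  have ha : 0 < a := lt_of_lt_of_le hb hba
  set I : Finset (Fin n) := (univ.erase i0).filter (fun i => l i ≠ 0) with hIdef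
  have hi0I : i0 ∉ I := by simp [hIdef]
  have hIb : ∀ i ∈ I, l i = b := by
    intro i hi
    rw [hIdef, Finset.mem_filter, Finset.mem_erase] at hi
    exact (hvals i hi.1.1).resolve_right hi.2
  set m : ℕ := I.card with hmdef
  have hsumI : ∑ i ∈ univ.erase i0, l i = (m:ℝ) * b := by
    have h1 : ∑ i ∈ I, l i = ∑ i ∈ univ.erase i0, l i := by
      rw [hIdef]; exact Finset.sum_filter_ne_zero _
    rw [← h1, Finset.sum_congr rfl hIb, Finset.sum_const, nsmul_eq_mul, hmdef]
  have hamb : a ≤ (m:ℝ) * b := by rw [← hsumI]; exact hsum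
  have hmpos : 0 < m := by
    by_contra h
    push_neg at h
    interval_cases m
    simp at hamb; linarith
  have hrm : (0:ℝ) < (m:ℝ) := by exact_mod_cast hmpos
  have hIne : I.Nonempty := Finset.card_pos.mp hmpos
  have hconv : Convex ℝ (convexHull ℝ (EV n)) := convex_convexHull ℝ (EV n)
  -- the "low" point
  obtain ⟨Plow, hPlowmem, hPlow_i0, hPlow_I, hPlow_z⟩ :
      ∃ P : Fin n → ℝ, P ∈ convexHull ℝ (EV n) ∧ P i0 = 1 ∧
        (∀ j ∈ I, P j = ((m:ℝ))⁻¹) ∧ (∀ j, j ≠ i0 → j ∉ I → P j = 0) := by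
      refine ⟨∑ i ∈ I, ((m:ℝ))⁻¹ •
          (fun t => if t ∈ ({i0, i} : Finset (Fin n)) then (1:ℝ) else 0), ?_, ?_, ?_, ?_⟩
      · rw [hmdef]
        apply avg_mem_hull I hIne
        intro i hi
        rw [Finset.card_insert_of_notMem
            (by simp only [Finset.mem_singleton]; exact fun h => hi0I (by rw [h]; exact hi)),
          Finset.card_singleton]
        norm_num
      · rw [avg_apply]
        have : I.filter (fun i => i0 ∈ ({i0, i} : Finset (Fin n))) = I := by
          apply Finset.filter_true_of_mem; intro i _; simp
        rw [this, ← hmdef, inv_mul_cancel₀ (ne_of_gt hrm)]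
      · intro j hj
        rw [avg_apply]
        have hji0 : j ≠ i0 := fun h => hi0I (h ▸ hj)
        have : I.filter (fun i => j ∈ ({i0, i} : Finset (Fin n))) = {j} := by
          ext x
          simp only [Finset.mem_filter, Finset.mem_insert, Finset.mem_singleton]
          constructor
          · rintro ⟨hx, h | h⟩
            · exact absurd h hji0
            · exact h.symm
          · rintro rfl; exact ⟨hj, Or.inr rfl⟩
        rw [this, Finset.card_singleton]
        norm_num
      · intro j hj0 hjI
        rw [avg_apply]
        have : I.filter (fun i => j ∈ ({i0, i} : Finset (Fin n))) = ∅ := by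
          ext x
          simp only [Finset.mem_filter, Finset.mem_insert, Finset.mem_singleton,
            Finset.notMem_empty, iff_false]
          rintro ⟨hx, h | h⟩
          · exact hj0 h
          · exact hjI (by rw [h]; exact hx)
        rw [this]
        simp
  -- the "high" points
  obtain ⟨V1, V0, g1, g0, hV1mem, hV0mem, hV1i0, hV0i0, hV1I, hV0I, hV1z, hV0z, hgb⟩ :
      ∃ (V1 V0 : Fin n → ℝ) (g1 g0 : ℝ),
        V1 ∈ convexHull ℝ (EV n) ∧ V0 ∈ convexHull ℝ (EV n) ∧
        V1 i0 = 1 ∧ V0 i0 = 0 ∧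
        (∀ j ∈ I, V1 j = g1) ∧ (∀ j ∈ I, V0 j = g0) ∧
        (∀ j, j ≠ i0 → j ∉ I → V1 j = 0) ∧ (∀ j, j ≠ i0 → j ∉ I → V0 j = 0) ∧
        b ≤ a * g1 + b * g0 := by
    rcases Nat.even_or_odd m with hme | hmo
    · -- m even : V1 = avg of insert i0 (I.erase i), V0 = chi I
      refine ⟨∑ i ∈ I, ((m:ℝ))⁻¹ •
          (fun t => if t ∈ insert i0 (I.erase i) then (1:ℝ) else 0),
          (fun t => if t ∈ I then (1:ℝ) else 0),
          ((m:ℝ))⁻¹ * ((m:ℝ) - 1), 1, ?_, ?_, ?_, ?_, ?_, ?_, ?_, ?_, ?_⟩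
      · rw [hmdef]
        apply avg_mem_hull I hIne
        intro i hi
        rw [Finset.card_insert_of_notMem (fun h => hi0I (Finset.mem_of_mem_erase h)),
          Finset.card_erase_of_mem hi, ← hmdef]
        rcases hme with ⟨r, hr⟩
        refine ⟨r, by omega⟩
      · exact subset_convexHull ℝ _ (chi_mem_EV (hmdef ▸ hme))
      · rw [avg_apply]
        have : I.filter (fun i => i0 ∈ insert i0 (I.erase i)) = I :=
          Finset.filter_true_of_mem (fun i _ => Finset.mem_insert_self _ _)
        rw [this, ← hmdef, inv_mul_cancel₀ (ne_of_gt hrm)]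
      · simp [hi0I]
      · intro j hj
        rw [avg_apply]
        have hji0 : j ≠ i0 := fun h => hi0I (h ▸ hj)
        have hfe : I.filter (fun i => j ∈ insert i0 (I.erase i)) = I.erase j := by
          ext x
          simp only [Finset.mem_filter, Finset.mem_insert, Finset.mem_erase]
          constructor
          · rintro ⟨hx, h | ⟨hjx, -⟩⟩
            · exact absurd h hji0
            · exact ⟨Ne.symm hjx, hx⟩
          · rintro ⟨hxj, hx⟩
            exact ⟨hx, Or.inr ⟨Ne.symm hxj, hj⟩⟩
        rw [hfe, Finset.card_erase_of_mem hj, ← hmdef, Nat.cast_sub hmpos, Nat.cast_one]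
      · intro j hj; simp [hj]
      · intro j hj0 hjI
        rw [avg_apply]
        have : I.filter (fun i => j ∈ insert i0 (I.erase i)) = ∅ := by
          ext x
          simp only [Finset.mem_filter, Finset.mem_insert, Finset.mem_erase,
            Finset.notMem_empty, iff_false]
          rintro ⟨hx, h | ⟨-, h⟩⟩
          · exact hj0 h
          · exact hjI h
        rw [this]; simp
      · intro j _ hjI; simp [hjI]
      · have hm1 : (1:ℝ) ≤ (m:ℝ) := by exact_mod_cast hmpos
        have h1 : (0:ℝ) ≤ a * (((m:ℝ))⁻¹ * ((m:ℝ) - 1)) :=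
          mul_nonneg ha.le (mul_nonneg (inv_nonneg.mpr (by linarith)) (by linarith))
        linarith
    · -- m odd : V1 = chi (insert i0 I), V0 = avg of I.erase i
      refine ⟨(fun t => if t ∈ insert i0 I then (1:ℝ) else 0),
          ∑ i ∈ I, ((m:ℝ))⁻¹ • (fun t => if t ∈ I.erase i then (1:ℝ) else 0),
          1, ((m:ℝ))⁻¹ * ((m:ℝ) - 1), ?_, ?_, ?_, ?_, ?_, ?_, ?_, ?_, ?_⟩
      · apply subset_convexHull
        apply chi_mem_EV
        rw [Finset.card_insert_of_notMem hi0I, ← hmdef]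
        rcases hmo with ⟨r, hr⟩
        exact ⟨r+1, by omega⟩
      · rw [hmdef]
        apply avg_mem_hull I hIne
        intro i hi
        rw [Finset.card_erase_of_mem hi, ← hmdef]
        rcases hmo with ⟨r, hr⟩
        exact ⟨r, by omega⟩
      · simp
      · rw [avg_apply]
        have : I.filter (fun i => i0 ∈ I.erase i) = ∅ := by
          ext x
          simp only [Finset.mem_filter, Finset.mem_erase, Finset.notMem_empty, iff_false]
          rintro ⟨hx, -, h⟩
          exact hi0I h
        rw [this]; simp
      · intro j hj; simp [hj]
      · intro j hj
        rw [avg_apply]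
        have hfe : I.filter (fun i => j ∈ I.erase i) = I.erase j := by
          ext x
          simp only [Finset.mem_filter, Finset.mem_erase]
          constructor
          · rintro ⟨hx, hji, -⟩
            exact ⟨Ne.symm hji, hx⟩
          · rintro ⟨hxj, hx⟩
            exact ⟨hx, Ne.symm hxj, hj⟩
        rw [hfe, Finset.card_erase_of_mem hj, ← hmdef, Nat.cast_sub hmpos, Nat.cast_one]
      · intro j hj0 hjI
        by_cases h : j ∈ insert i0 I
        · rcases Finset.mem_insert.mp h with h | h
          · exact absurd h hj0
          · exact absurd h hjI
        · simp [h]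
      · intro j _ hjI
        rw [avg_apply]
        have : I.filter (fun i => j ∈ I.erase i) = ∅ := by
          ext x
          simp only [Finset.mem_filter, Finset.mem_erase, Finset.notMem_empty, iff_false]
          rintro ⟨hx, -, h⟩
          exact hjI h
        rw [this]; simp
      · -- b ≤ a * 1 + b * ((m-1)/m) ⟺ b * (1/m) ≤ a
        have hm1 : (1:ℝ) ≤ (m:ℝ) := by exact_mod_cast hmpos
        have hinv1 : ((m:ℝ))⁻¹ ≤ 1 := by
          have hinvm : ((m:ℝ))⁻¹ * (m:ℝ) = 1 := inv_mul_cancel₀ (ne_of_gt hrm)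
          nlinarith [inv_nonneg.mpr hrm.le]
        have h1 : b * ((m:ℝ))⁻¹ ≤ b := by nlinarith [hb.le]
        have h2 : b * (((m:ℝ))⁻¹ * ((m:ℝ) - 1)) = b - b * ((m:ℝ))⁻¹ := by
          have hids : ((m:ℝ))⁻¹ * ((m:ℝ) - 1) = 1 - ((m:ℝ))⁻¹ := by
            rw [mul_sub, inv_mul_cancel₀ (ne_of_gt hrm), mul_one]
          rw [hids]; ring
        rw [h2]
        linarith
  -- interpolation
  have hvlow : a * ((m:ℝ))⁻¹ ≤ b := by
    rw [mul_inv_le_iff₀ hrm]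
    linarith [hamb]
  have hvhigh : b ≤ a * g1 + b * g0 := hgb
  have hle : a * ((m:ℝ))⁻¹ ≤ a * g1 + b * g0 := le_trans hvlow hvhigh
  have hbseg : b ∈ segment ℝ (a * ((m:ℝ))⁻¹) (a * g1 + b * g0) := by
    rw [segment_eq_Icc hle]
    exact ⟨hvlow, hvhigh⟩
  obtain ⟨u, v, hu, hv, huv, hcomb⟩ := hbseg
  -- assemble
  have hplowmem : a • Plow + b • (0 : Fin n → ℝ) ∈ convexHull ℝ (EV n) :=
    hconv hPlowmem (subset_convexHull ℝ _ (zero_mem_EV n)) ha.le hb.le hab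
  have hphighmem : a • V1 + b • V0 ∈ convexHull ℝ (EV n) :=
    hconv hV1mem hV0mem ha.le hb.le hab
  have hfinal : u • (a • Plow + b • (0 : Fin n → ℝ)) + v • (a • V1 + b • V0)
      ∈ convexHull ℝ (EV n) := hconv hplowmem hphighmem hu hv huv
  have hl : l = u • (a • Plow + b • (0 : Fin n → ℝ)) + v • (a • V1 + b • V0) := by
    funext j
    simp only [Pi.add_apply, Pi.smul_apply, smul_eq_mul, Pi.zero_apply, mul_zero, add_zero]
    by_cases hj0 : j = i0
    · rw [hj0, hPlow_i0, hV1i0, hV0i0]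
      simp only [mul_one, mul_zero, add_zero, ← hadef]
      calc a = (u + v) * a := by rw [huv]; ring
      _ = u * (a * 1) + v * (a * 1 + b * 0) := by ring
      _ = _ := by ring
    · by_cases hjI : j ∈ I
      · rw [hPlow_I j hjI, hV1I j hjI, hV0I j hjI, hIb j hjI]
        rw [smul_eq_mul, smul_eq_mul] at hcomb
        linarith [hcomb]
      · rw [hPlow_z j hj0 hjI, hV1z j hj0 hjI, hV0z j hj0 hjI]
        have : l j = 0 := by
          by_contra h
          exact hjI (by rw [hIdef]; simp [hj0, h])
        rw [this]; ring
  rw [hl]; exact hfinal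

def Tset (n : ℕ) (hn : 2 ≤ n) : Set (Fin n → ℝ) :=
  {l : Fin n → ℝ | (∀ i, l i ∈ Set.Icc (0 : ℝ) 1) ∧
    (∀ i j : Fin n, i ≤ j → l j ≤ l i) ∧
    l ⟨0, Nat.zero_lt_two.trans_le hn⟩ + l ⟨1, Nat.one_lt_two.trans_le hn⟩ ≤ 1 ∧
    l ⟨0, Nat.zero_lt_two.trans_le hn⟩ ≤ ∑ i ∈ univ.erase (⟨0, Nat.zero_lt_two.trans_le hn⟩ : Fin n), l i}

lemma T_convex (hn : 2 ≤ n) : Convex ℝ (Tset n hn) := by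
  intro x hx y hy u v hu hv huv
  obtain ⟨hx1, hx2, hx3, hx4⟩ := hx
  obtain ⟨hy1, hy2, hy3, hy4⟩ := hy
  refine ⟨?_, ?_, ?_, ?_⟩
  · intro i
    have := (convex_Icc (0:ℝ) 1) (hx1 i) (hy1 i) hu hv huv
    simpa using this
  · intro i j hij
    have h1 := hx2 i j hij
    have h2 := hy2 i j hij
    simp only [Pi.add_apply, Pi.smul_apply, smul_eq_mul]
    nlinarith
  · simp only [Pi.add_apply, Pi.smul_apply, smul_eq_mul]
    nlinarith
  · simp only [Pi.add_apply, Pi.smul_apply, smul_eq_mul, Finset.sum_add_distrib,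
      ← Finset.mul_sum]
    nlinarith

lemma T_isCompact (hn : 2 ≤ n) : IsCompact (Tset n hn) := by
  have hclosed : IsClosed (Tset n hn) := by
    have h1 : IsClosed {l : Fin n → ℝ | ∀ i, l i ∈ Set.Icc (0:ℝ) 1} := by
      have : {l : Fin n → ℝ | ∀ i, l i ∈ Set.Icc (0:ℝ) 1}
          = ⋂ i, (fun l : Fin n → ℝ => l i) ⁻¹' (Set.Icc 0 1) := by ext; simp [Set.mem_iInter]
      rw [this]
      exact isClosed_iInter fun i => isClosed_Icc.preimage (continuous_apply i)
    have h2 : IsClosed {l : Fin n → ℝ | ∀ i j : Fin n, i ≤ j → l j ≤ l i} := by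
      have : {l : Fin n → ℝ | ∀ i j : Fin n, i ≤ j → l j ≤ l i}
          = ⋂ (i) (j), {l : Fin n → ℝ | i ≤ j → l j ≤ l i} := by ext; simp [Set.mem_iInter]
      rw [this]
      refine isClosed_iInter fun i => isClosed_iInter fun j => ?_
      by_cases hij : i ≤ j
      · simp only [hij, forall_true_left]
        exact isClosed_le (continuous_apply j) (continuous_apply i)
      · have : {l : Fin n → ℝ | i ≤ j → l j ≤ l i} = Set.univ := by
          ext; simp [hij]
        rw [this]; exact isClosed_univ
    have h3 : IsClosed {l : Fin n → ℝ | l ⟨0, Nat.zero_lt_two.trans_le hn⟩ + l ⟨1, Nat.one_lt_two.trans_le hn⟩ ≤ (1:ℝ)} :=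
      isClosed_le ((continuous_apply (⟨0, Nat.zero_lt_two.trans_le hn⟩ : Fin n)).add
        (continuous_apply (⟨1, Nat.one_lt_two.trans_le hn⟩ : Fin n))) continuous_const
    have h4 : IsClosed {l : Fin n → ℝ |
        l ⟨0, Nat.zero_lt_two.trans_le hn⟩ ≤ ∑ i ∈ univ.erase (⟨0, Nat.zero_lt_two.trans_le hn⟩ : Fin n), l i} :=
      isClosed_le (continuous_apply _)
        (continuous_finset_sum _ fun i _ => continuous_apply i)
    have : Tset n hn = {l : Fin n → ℝ | ∀ i, l i ∈ Set.Icc (0:ℝ) 1}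
        ∩ ({l : Fin n → ℝ | ∀ i j : Fin n, i ≤ j → l j ≤ l i}
        ∩ ({l : Fin n → ℝ | l ⟨0, Nat.zero_lt_two.trans_le hn⟩ + l ⟨1, Nat.one_lt_two.trans_le hn⟩ ≤ (1:ℝ)}
          ∩ {l : Fin n → ℝ |
            l ⟨0, Nat.zero_lt_two.trans_le hn⟩ ≤ ∑ i ∈ univ.erase (⟨0, Nat.zero_lt_two.trans_le hn⟩ : Fin n), l i})) := by
      rfl
    rw [this]
    exact h1.inter (h2.inter (h3.inter h4))
  apply IsCompact.of_isClosed_subset (isCompact_univ_pi (fun _ : Fin n => isCompact_Icc)) hclosed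
  intro l hl
  exact fun i _ => hl.1 i

lemma move (hn : 2 ≤ n) (l : Fin n → ℝ) (hl : l ∈ Tset n hn) (c : ℝ)
    (hc : 0 < c) (hcmin : ∀ i, l i ≠ 0 → c ≤ l i) (hcmem : ∃ i, l i = c)
    (hstrict : l ⟨0, Nat.zero_lt_two.trans_le hn⟩ < ∑ i ∈ univ.erase (⟨0, Nat.zero_lt_two.trans_le hn⟩ : Fin n), l i)
    (hq : ¬(l ⟨0, Nat.zero_lt_two.trans_le hn⟩ + l ⟨1, Nat.one_lt_two.trans_le hn⟩ = 1 ∧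
      (l ⟨0, Nat.zero_lt_two.trans_le hn⟩ = c ∨ l ⟨1, Nat.one_lt_two.trans_le hn⟩ = c))) :
    ∃ ε > 0, ∀ η : ℝ, |η| ≤ ε →
      (fun i => l i + η * (if l i = c then 1 else 0)) ∈ Tset n hn := by
  classical
  obtain ⟨hIcc, hsort, h12, _⟩ := hl
  set i0 : Fin n := ⟨0, Nat.zero_lt_two.trans_le hn⟩ with hi0def
  set i1 : Fin n := ⟨1, Nat.one_lt_two.trans_le hn⟩ with hi1def
  haveI : Nonempty (Fin n) := ⟨i0⟩
  have hi01 : i0 ≤ i1 := by simp [hi0def, hi1def, Fin.le_def]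
  -- c < 1
  have hcle : c ≤ l i0 := by
    obtain ⟨jc, hjc⟩ := hcmem
    have : i0 ≤ jc := by simp [hi0def, Fin.le_def]
    exact hjc ▸ hsort i0 jc this
  have hc1 : c < 1 := by
    by_contra h
    push_neg at h
    have hl0 : l i0 = 1 := le_antisymm (hIcc i0).2 (le_trans h hcle)
    have hl1 : l i1 = 0 := le_antisymm (by linarith) (hIcc i1).1
    have hall : ∀ i ∈ univ.erase i0, l i = 0 := by
      intro i hi
      obtain ⟨hne, -⟩ := Finset.mem_erase.mp hi
      have h1i : i1 ≤ i := by
        rw [Fin.le_def]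
        have : i.val ≠ 0 := fun h0 => hne (Fin.ext h0)
        simp [hi1def]; omega
      exact le_antisymm (hl1 ▸ hsort i1 i h1i) (hIcc i).1
    rw [Finset.sum_eq_zero hall] at hstrict
    linarith
  -- slack function
  set g : Fin n → ℝ := fun j =>
    min (if l j < c then c - l j else 1) (if c < l j then l j - c else 1) with hgdef
  set δ : ℝ := univ.inf' Finset.univ_nonempty g with hδdef
  clear_value δ
  have hδpos : 0 < δ := by
    rw [hδdef, Finset.lt_inf'_iff]
    intro j _
    rw [hgdef]
    apply lt_min
    · by_cases h : l j < c <;> simp [h] <;> linarith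
    · by_cases h : c < l j <;> simp [h] <;> linarith
  have hδle : ∀ j, δ ≤ g j := fun j => hδdef ▸ Finset.inf'_le g (Finset.mem_univ j)
  clear_value g
  set Stwo : ℝ := ∑ i ∈ univ.erase i0, l i with hStwodef
  clear_value Stwo
  have hnR : (0:ℝ) < (n:ℝ) := by
    have : 0 < n := by omega
    exact_mod_cast this
  set A1 : ℝ := (Stwo - l i0) / n with hA1def
  clear_value A1
  have hA1pos : 0 < A1 := by
    rw [hA1def]
    exact div_pos (by linarith) hnR
  set A2 : ℝ := if (l i0 = c ∨ l i1 = c) then 1 - l i0 - l i1 else 1 with hA2def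
  clear_value A2
  have hA2pos : 0 < A2 := by
    rw [hA2def]
    by_cases h : (l i0 = c ∨ l i1 = c)
    · rw [if_pos h]
      have hne1 : l i0 + l i1 ≠ 1 := fun he => hq ⟨he, h⟩
      rcases lt_or_eq_of_le h12 with h' | h'
      · linarith
      · exact absurd h' hne1
    · rw [if_neg h]; norm_num
  set ε : ℝ := min A1 (min (A2 / 2) (min c (min (1 - c) δ))) with hεdef
  clear_value ε
  have hεpos : 0 < ε := by
    rw [hεdef]
    apply lt_min hA1pos
    apply lt_min (by linarith)
    apply lt_min hc
    exact lt_min (by linarith) hδpos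
  refine ⟨ε, hεpos, ?_⟩
  intro η hη
  rw [abs_le] at hη
  obtain ⟨hη1, hη2⟩ := hη
  have hεA1 : ε ≤ A1 := by rw [hεdef]; exact min_le_left _ _
  have hεA2 : ε ≤ A2 / 2 := by rw [hεdef]; exact le_trans (min_le_right _ _) (min_le_left _ _)
  have hεc : ε ≤ c := by
    rw [hεdef]
    exact le_trans (min_le_right _ _) (le_trans (min_le_right _ _) (min_le_left _ _))
  have hεc1 : ε ≤ 1 - c := by
    rw [hεdef]
    exact le_trans (min_le_right _ _) (le_trans (min_le_right _ _)
      (le_trans (min_le_right _ _) (min_le_left _ _)))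
  have hεδ : ε ≤ δ := by
    rw [hεdef]
    exact le_trans (min_le_right _ _) (le_trans (min_le_right _ _)
      (le_trans (min_le_right _ _) (min_le_right _ _)))
  have hglow : ∀ j, l j < c → ε ≤ c - l j := by
    intro j hj
    have := hδle j
    rw [hgdef] at this
    simp only [if_pos hj] at this
    have := le_trans this (min_le_left _ _)
    linarith [hεδ]
  have hghigh : ∀ j, c < l j → ε ≤ l j - c := by
    intro j hj
    have h := hδle j
    rw [hgdef] at h
    have h2 := le_trans h (min_le_right _ _)
    rw [if_pos hj] at h2
    linarith [hεδ]
  refine ⟨?_, ?_, ?_, ?_⟩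
  · -- bounds
    intro i
    show l i + η * (if l i = c then 1 else 0) ∈ Set.Icc (0:ℝ) 1
    by_cases hic : l i = c
    · rw [if_pos hic, mul_one, hic, Set.mem_Icc]
      constructor <;> linarith
    · rw [if_neg hic, mul_zero, add_zero]
      exact hIcc i
  · -- sorted
    intro i j hij
    have hji := hsort i j hij
    show l j + η * (if l j = c then 1 else 0) ≤ l i + η * (if l i = c then 1 else 0)
    by_cases hic : l i = c <;> by_cases hjc : l j = c
    · simp only [if_pos hic, if_pos hjc]; linarith
    · simp only [if_pos hic, if_neg hjc, mul_one, mul_zero, add_zero]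
      have hjlt : l j < c := lt_of_le_of_ne (hic ▸ hji) hjc
      have := hglow j hjlt
      linarith
    · simp only [if_neg hic, if_pos hjc, mul_one, mul_zero, add_zero]
      have hilt : c < l i := lt_of_le_of_ne (hjc ▸ hji) (Ne.symm hic)
      have := hghigh i hilt
      linarith
    · simp only [if_neg hic, if_neg hjc, mul_zero, add_zero]; linarith
  · -- l'0 + l'1 ≤ 1
    show l i0 + η * (if l i0 = c then 1 else 0) + (l i1 + η * (if l i1 = c then 1 else 0)) ≤ 1
    by_cases h : (l i0 = c ∨ l i1 = c)
    · have hA2eq : A2 = 1 - l i0 - l i1 := by rw [hA2def, if_pos h]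
      have e0 : η * (if l i0 = c then (1:ℝ) else 0) ≤ ε := by
        by_cases h0 : l i0 = c <;> simp [h0] <;> linarith
      have e1 : η * (if l i1 = c then (1:ℝ) else 0) ≤ ε := by
        by_cases h0 : l i1 = c <;> simp [h0] <;> linarith
      have h5 : ε ≤ (1 - l i0 - l i1) / 2 := by
        rw [hA2eq] at hεA2; linarith
      linarith
    · push_neg at h
      simp only [if_neg h.1, if_neg h.2, mul_zero, add_zero]
      exact h12
  · -- sum constraint
    show l i0 + η * (if l i0 = c then 1 else 0)
      ≤ ∑ i ∈ univ.erase i0, (l i + η * (if l i = c then 1 else 0))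
    have hsum_eq : ∑ i ∈ univ.erase i0, (l i + η * (if l i = c then 1 else 0))
        = Stwo + η * (((univ.erase i0).filter (fun i => l i = c)).card : ℝ) := by
      rw [Finset.sum_add_distrib, ← Finset.mul_sum, hStwodef]
      congr 1
      rw [Finset.sum_boole]
    rw [hsum_eq]
    set t : ℝ := (((univ.erase i0).filter (fun i => l i = c)).card : ℝ) with htdef
    clear_value t
    have ht0 : 0 ≤ t := by rw [htdef]; exact Nat.cast_nonneg _
    have htn : t ≤ (n:ℝ) - 1 := by
      rw [htdef]
      have h1 : ((univ.erase i0).filter (fun i => l i = c)).card ≤ n - 1 := by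
        calc ((univ.erase i0).filter (fun i => l i = c)).card
            ≤ (univ.erase i0).card := Finset.card_filter_le _ _
          _ = n - 1 := by
              rw [Finset.card_erase_of_mem (Finset.mem_univ i0), Finset.card_univ,
                Fintype.card_fin]
      have h2 : (((univ.erase i0).filter (fun i => l i = c)).card : ℝ) ≤ ((n - 1 : ℕ) : ℝ) := by
        exact_mod_cast h1
      have h3 : ((n - 1 : ℕ) : ℝ) = (n : ℝ) - 1 := by
        rw [Nat.cast_sub (by omega), Nat.cast_one]
      rw [h3] at h2
      exact h2
    have hn1 : (1:ℝ) ≤ (n:ℝ) := by exact_mod_cast Nat.one_le_of_lt hn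
    have hεn : ε * (n:ℝ) ≤ Stwo - l i0 := by
      have h5 : ε ≤ (Stwo - l i0) / n := hA1def ▸ hεA1
      exact (le_div_iff₀ hnR).mp h5
    have hmt : -(η * t) ≤ ε * t := by
      have h6 := mul_le_mul_of_nonneg_right (show -η ≤ ε by linarith) ht0
      rw [neg_mul] at h6
      linarith
    have hmt2 : η * t ≤ ε * t := by
      have h6 := mul_le_mul_of_nonneg_right hη2 ht0
      linarith
    have h4 : ε * t ≤ ε * ((n:ℝ) - 1) := mul_le_mul_of_nonneg_left htn hεpos.le
    by_cases h0 : l i0 = c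
    · simp only [if_pos h0, mul_one]
      linarith
    · simp only [if_neg h0, mul_zero, add_zero]
      linarith

lemma extremePoints_sub_hull (hn : 2 ≤ n) :
    Set.extremePoints ℝ (Tset n hn) ⊆ convexHull ℝ (EV n) := by
  classical
  intro l hl
  obtain ⟨hlT, hext⟩ := mem_extremePoints.mp hl
  obtain ⟨hIcc, hsort, h12, hsum⟩ := hlT
  set i0 : Fin n := ⟨0, Nat.zero_lt_two.trans_le hn⟩ with hi0def
  set i1 : Fin n := ⟨1, Nat.one_lt_two.trans_le hn⟩ with hi1def
  have hi01 : i0 ≤ i1 := by simp [hi0def, hi1def, Fin.le_def]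
  by_cases hz : ∀ i, l i = 0
  · have : l = 0 := funext hz
    rw [this]
    exact subset_convexHull ℝ _ (zero_mem_EV n)
  by_cases htight : l i0 = ∑ i ∈ univ.erase i0, l i
  · exact caseA hn l (fun i => (hIcc i).1) (hIcc i0).2 htight
  have hstrict : l i0 < ∑ i ∈ univ.erase i0, l i := lt_of_le_of_ne hsum htight
  push_neg at hz
  set V : Finset (Fin n) := univ.filter (fun i => l i ≠ 0) with hVdef
  have hVne : V.Nonempty := by
    obtain ⟨i, hi⟩ := hz
    exact ⟨i, by simp [hVdef, hi]⟩
  set js : Fin n := V.max' hVne with hjsdef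
  set c : ℝ := l js with hcdef
  have hjsV : js ∈ V := V.max'_mem hVne
  have hcne : c ≠ 0 := by
    have := (Finset.mem_filter.mp hjsV).2
    rw [hcdef]; exact this
  have hcpos : 0 < c := lt_of_le_of_ne (hIcc js).1 (Ne.symm hcne)
  have hcmin : ∀ i, l i ≠ 0 → c ≤ l i := by
    intro i hi
    have hiV : i ∈ V := by simp [hVdef, hi]
    have : i ≤ js := Finset.le_max' V i hiV
    exact hsort i js this
  by_cases hq : l i0 + l i1 = 1 ∧ (l i0 = c ∨ l i1 = c)
  · -- lemma Q case
    have h10 : l i1 ≠ 0 := by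
      intro h0
      have hall : ∀ i ∈ univ.erase i0, l i = 0 := by
        intro i hi
        obtain ⟨hne, -⟩ := Finset.mem_erase.mp hi
        have h1i : i1 ≤ i := by
          rw [Fin.le_def]
          have : i.val ≠ 0 := fun hval => hne (Fin.ext hval)
          simp [hi1def]; omega
        exact le_antisymm (h0 ▸ hsort i1 i h1i) (hIcc i).1
      rw [Finset.sum_eq_zero hall] at hstrict
      linarith [(hIcc i0).1]
    have h1c : l i1 = c := by
      rcases hq.2 with h | h
      · exact le_antisymm (h ▸ hsort i0 i1 hi01) (hcmin i1 h10)
      · exact h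
    apply lemmaQ hn l c hcpos (h1c ▸ hsort i0 i1 hi01) (by rw [← h1c]; exact hq.1) ?_ hsum
    intro i hi
    by_cases h0 : l i = 0
    · exact Or.inr h0
    · left
      have h1i : i1 ≤ i := by
        rw [Fin.le_def]
        have : i.val ≠ 0 := fun hval => hi (Fin.ext hval)
        simp [hi1def]; omega
      exact le_antisymm (h1c ▸ hsort i1 i h1i) (hcmin i h0)
  · -- move case: contradiction with extremality
    exfalso
    obtain ⟨ε, hε, hmove⟩ :=
      move hn l ⟨hIcc, hsort, h12, hsum⟩ c hcpos hcmin ⟨js, rfl⟩ hstrict hq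
    set x₁ : Fin n → ℝ := fun i => l i + (-ε) * (if l i = c then 1 else 0) with hx1def
    set x₂ : Fin n → ℝ := fun i => l i + ε * (if l i = c then 1 else 0) with hx2def
    have hx1T : x₁ ∈ Tset n hn := hmove (-ε) (by rw [abs_neg, abs_of_pos hε])
    have hx2T : x₂ ∈ Tset n hn := hmove ε (by rw [abs_of_pos hε])
    have hseg : l ∈ openSegment ℝ x₁ x₂ := by
      refine ⟨1/2, 1/2, by norm_num, by norm_num, by norm_num, ?_⟩
      funext i
      simp only [hx1def, hx2def, Pi.add_apply, Pi.smul_apply, smul_eq_mul]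
      ring
    have h1 := (hext x₁ hx1T x₂ hx2T hseg).1
    have h2 : l js + (-ε) * (if l js = c then 1 else 0) = l js := by
      have h3 : x₁ js = l js := by rw [h1]
      exact h3
    rw [if_pos hcdef.symm] at h2
    linarith

end TnAux


/-- `T_n = DC_n ∩ F_n`: the set of `l ∈ [0,1]ⁿ` with `l₁ ≥ … ≥ l_n`, `l₁ + l₂ ≤ 1` and
`l₁ ≤ l₂ + … + l_n` is the intersection of the `n`-demicube (convex hull of even vertices of
the cube) with the fundamental domain `F_n`. -/
theorem Tn_eq_demicube_inter_Fn (n : ℕ) (hn : 2 ≤ n) :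
    {l : Fin n → ℝ | (∀ i, l i ∈ Set.Icc (0 : ℝ) 1) ∧
        (∀ i j : Fin n, i ≤ j → l j ≤ l i) ∧
        l ⟨0, by omega⟩ + l ⟨1, by omega⟩ ≤ 1 ∧
        l ⟨0, by omega⟩ ≤ ∑ i ∈ univ.erase (⟨0, by omega⟩ : Fin n), l i} =
      (convexHull ℝ {v : Fin n → ℝ |
          (∀ i, v i = 0 ∨ v i = 1) ∧ ∃ k : ℤ, ∑ i, v i = 2 * (k : ℝ)}) ∩
        {l : Fin n → ℝ | (∀ i, l i ∈ Set.Icc (0 : ℝ) 1) ∧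
          (∀ i j : Fin n, i ≤ j → l j ≤ l i) ∧
          l ⟨0, by omega⟩ + l ⟨1, by omega⟩ ≤ 1} := by
  have hEV : {v : Fin n → ℝ |
      (∀ i, v i = 0 ∨ v i = 1) ∧ ∃ k : ℤ, ∑ i, v i = 2 * (k : ℝ)} = TnAux.EV n := rfl
  rw [hEV]
  apply Set.Subset.antisymm
  · intro l hl
    have hlT : l ∈ TnAux.Tset n hn := hl
    constructor
    · have hKM := closure_convexHull_extremePoints (TnAux.T_isCompact hn) (TnAux.T_convex hn)
      have hsub : convexHull ℝ (Set.extremePoints ℝ (TnAux.Tset n hn))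
          ⊆ convexHull ℝ (TnAux.EV n) :=
        convexHull_min (TnAux.extremePoints_sub_hull hn) (convex_convexHull ℝ _)
      have hclosed : IsClosed (convexHull ℝ (TnAux.EV n)) :=
        ((TnAux.EV_finite n).isCompact_convexHull (𝕜 := ℝ)).isClosed
      have hfin : TnAux.Tset n hn ⊆ convexHull ℝ (TnAux.EV n) := by
        rw [← hKM]
        exact le_trans (closure_mono hsub) (le_of_eq hclosed.closure_eq)
      exact hfin hlT
    · exact ⟨hl.1, hl.2.1, hl.2.2.1⟩
  · rintro l ⟨hhull, hIcc, hsort, h12⟩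
    exact ⟨hIcc, hsort, h12, TnAux.hull_sub_halfspace hn hhull⟩
end

section
/- Consider the conjugation action of the diagonal subgroup H = {diag(e^{is}, e^{−is})} on SU₂. Writing M ∈ SU₂ as [[m₁₁, −conj(m₂₁)],[m₂₁, conj(m₁₁)]], the functions f(M) = tr(M) = 2·Re(m₁₁) and g(M) = tr(M·B), where B = diag(e^{iπ(t−1)}, e^{−iπ(t−1)}) with t ∈ (0,1), separate H-orbits: two matrices M, M′ ∈ SU₂ lie in the same H-orbit if and only if f(M) = f(M′) and g(M) = g(M′). -/
open Matrix Complex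

/-- The diagonal element `diag(e^{is}, e^{-is})` of `SU₂`. -/
noncomputable def diagRot (s : ℝ) : Matrix (Fin 2) (Fin 2) ℂ :=
  !![Complex.exp (s * Complex.I), 0; 0, Complex.exp (-(s * Complex.I))]

lemma su2_struct (M : Matrix (Fin 2) (Fin 2) ℂ)
    (hM : M ∈ Matrix.specialUnitaryGroup (Fin 2) ℂ) :
    M 1 1 = starRingEnd ℂ (M 0 0) ∧ M 0 1 = - starRingEnd ℂ (M 1 0) ∧
      starRingEnd ℂ (M 0 0) * M 0 0 + starRingEnd ℂ (M 1 0) * M 1 0 = 1 := by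
  rw [Matrix.mem_specialUnitaryGroup_iff, Matrix.mem_unitaryGroup_iff'] at hM
  obtain ⟨h1, h2⟩ := hM
  have h3 : M * M.adjugate = 1 := by rw [Matrix.mul_adjugate, h2, one_smul]
  have key : Mᴴ = M.adjugate := by
    calc Mᴴ = Mᴴ * (M * M.adjugate) := by rw [h3, mul_one]
      _ = (star M * M) * M.adjugate := by
          rw [Matrix.star_eq_conjTranspose, mul_assoc]
      _ = M.adjugate := by rw [h1, one_mul]
  rw [Matrix.adjugate_fin_two] at key
  have k00 := congrArg (fun N : Matrix (Fin 2) (Fin 2) ℂ => N 0 0) key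
  have k01 := congrArg (fun N : Matrix (Fin 2) (Fin 2) ℂ => N 0 1) key
  have e1 := congrArg (fun N : Matrix (Fin 2) (Fin 2) ℂ => N 0 0) h1
  simp [Matrix.conjTranspose_apply, Matrix.mul_apply, Fin.sum_univ_two,
    Matrix.star_eq_conjTranspose, Matrix.one_apply] at k00 k01 e1
  refine ⟨k00.symm, ?_, ?_⟩
  · linear_combination k01
  · linear_combination e1

lemma conj_apply (s : ℝ) (M : Matrix (Fin 2) (Fin 2) ℂ) :
    diagRot s * M * diagRot (-s) =
      !![M 0 0, Complex.exp (2*s*Complex.I) * M 0 1;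
         Complex.exp (-(2*s*Complex.I)) * M 1 0, M 1 1] := by
  have h : ∀ x y : ℂ, Complex.exp x * Complex.exp y = Complex.exp (x + y) :=
    fun x y => (Complex.exp_add x y).symm
  ext i j
  fin_cases i <;> fin_cases j <;>
    · simp [diagRot, Matrix.mul_apply, Matrix.vecMul, dotProduct,
        Fin.sum_univ_two]
      rw [mul_comm, ← mul_assoc, h]
      ring_nf
      try simp [Complex.exp_zero]

lemma trB (θ : ℂ) (N : Matrix (Fin 2) (Fin 2) ℂ) :
    (N * !![Complex.exp (θ * Complex.I), 0;
            0, Complex.exp (-(θ * Complex.I))]).trace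
      = N 0 0 * Complex.exp (θ * Complex.I) + N 1 1 * Complex.exp (-(θ * Complex.I)) := by
  simp [Matrix.trace_fin_two, Matrix.mul_apply, Fin.sum_univ_two]

lemma exp_sub_exp (θ : ℝ) :
    Complex.exp (θ * Complex.I) - Complex.exp (-(θ * Complex.I))
      = (2 * Real.sin θ : ℝ) * Complex.I := by
  rw [Complex.exp_mul_I, ← neg_mul, Complex.exp_mul_I, Complex.cos_neg, Complex.sin_neg]
  push_cast [← Complex.ofReal_sin, ← Complex.ofReal_cos]
  ring

/-- For `t ∈ (0,1)` and `B = diag(e^{iπ(t−1)}, e^{−iπ(t−1)})`, the functions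
`f(M) = tr M` and `g(M) = tr (M·B)` separate orbits of the conjugation action of the
diagonal subgroup `H` on `SU₂`: two elements of `SU₂` are `H`-conjugate iff they have the
same values of `f` and `g`. -/
theorem traces_separate_H_orbits (t : ℝ) (ht : t ∈ Set.Ioo (0 : ℝ) 1)
    (M M' : Matrix (Fin 2) (Fin 2) ℂ)
    (hM : M ∈ Matrix.specialUnitaryGroup (Fin 2) ℂ)
    (hM' : M' ∈ Matrix.specialUnitaryGroup (Fin 2) ℂ) :
    (∃ s : ℝ, diagRot s * M * diagRot (-s) = M') ↔
      (M.trace = M'.trace ∧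
        (M * !![Complex.exp (Real.pi * (t - 1) * Complex.I), 0;
                0, Complex.exp (-(Real.pi * (t - 1) * Complex.I))]).trace =
        (M' * !![Complex.exp (Real.pi * (t - 1) * Complex.I), 0;
                0, Complex.exp (-(Real.pi * (t - 1) * Complex.I))]).trace) := by
  obtain ⟨ht0, ht1⟩ := ht
  obtain ⟨hd, hb, hn⟩ := su2_struct M hM
  obtain ⟨hd', hb', hn'⟩ := su2_struct M' hM'
  have hθc : (Real.pi : ℂ) * ((t:ℂ) - 1) = ((Real.pi * (t - 1) : ℝ) : ℂ) := by
    push_cast; ring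
  constructor
  · rintro ⟨s, rfl⟩
    rw [conj_apply]
    constructor
    · simp [Matrix.trace_fin_two]
    · rw [trB, trB]; simp
  · rintro ⟨h1, h2⟩
    rw [trB, trB, hθc] at h2
    rw [Matrix.trace_fin_two, Matrix.trace_fin_two] at h1
    rw [hd, hd'] at h1 h2
    -- sin θ ≠ 0
    have h4 : 0 < Real.sin (Real.pi * (1 - t)) :=
      Real.sin_pos_of_pos_of_lt_pi (by nlinarith [Real.pi_pos]) (by nlinarith [Real.pi_pos])
    have h5 : Real.sin (Real.pi * (t - 1)) = - Real.sin (Real.pi * (1 - t)) := by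
      rw [show Real.pi * (t - 1) = -(Real.pi * (1 - t)) by ring, Real.sin_neg]
    have hsin : Real.sin (Real.pi * (t - 1)) ≠ 0 := by rw [h5]; linarith
    -- a = a'
    have hu : starRingEnd ℂ (M 0 0) - starRingEnd ℂ (M' 0 0) = M' 0 0 - M 0 0 := by
      linear_combination h1
    have h3 : (M 0 0 - M' 0 0) *
        (Complex.exp (((Real.pi * (t - 1) : ℝ) : ℂ) * Complex.I)
          - Complex.exp (-(((Real.pi * (t - 1) : ℝ) : ℂ) * Complex.I))) = 0 := by
      linear_combination h2 - Complex.exp (-(((Real.pi * (t - 1) : ℝ) : ℂ) * Complex.I)) * hu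
    have hne : Complex.exp (((Real.pi * (t - 1) : ℝ) : ℂ) * Complex.I)
        - Complex.exp (-(((Real.pi * (t - 1) : ℝ) : ℂ) * Complex.I)) ≠ 0 := by
      rw [exp_sub_exp]
      exact mul_ne_zero (Complex.ofReal_ne_zero.mpr (mul_ne_zero two_ne_zero hsin))
        Complex.I_ne_zero
    have ha : M 0 0 = M' 0 0 := sub_eq_zero.mp ((mul_eq_zero.mp h3).resolve_right hne)
    have hc : starRingEnd ℂ (M 1 0) * M 1 0 = starRingEnd ℂ (M' 1 0) * M' 1 0 := by
      rw [ha] at hn; linear_combination hn - hn'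
    by_cases h0 : M 1 0 = 0
    · have hc0 : starRingEnd ℂ (M' 1 0) * M' 1 0 = 0 := by rw [← hc, h0, mul_zero]
      have hc'0 : M' 1 0 = 0 := by
        rcases mul_eq_zero.mp hc0 with h | h
        · simpa using h
        · exact h
      refine ⟨0, ?_⟩
      rw [conj_apply]
      ext i j
      fin_cases i <;> fin_cases j <;>
        simp [ha, hb, hb', hd, hd', h0, hc'0]
    · set z := M' 1 0 / M 1 0 with hzdef
      have hz : z * M 1 0 = M' 1 0 := div_mul_cancel₀ _ h0
      have habsc : ‖M 1 0‖ = ‖M' 1 0‖ := by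
        have h6 : Complex.normSq (M 1 0) = Complex.normSq (M' 1 0) := by
          have h7 := hc
          rw [← Complex.normSq_eq_conj_mul_self, ← Complex.normSq_eq_conj_mul_self] at h7
          exact_mod_cast h7
        rw [Complex.norm_def, Complex.norm_def, h6]
      have habs : ‖z‖ = 1 := by
        rw [hzdef, norm_div, ← habsc, div_self]
        simpa using h0
      have hz1 : Complex.exp ((Complex.arg z : ℂ) * Complex.I) = z := by
        have h7 := Complex.norm_mul_exp_arg_mul_I z
        rwa [habs, Complex.ofReal_one, one_mul] at h7
      refine ⟨-(Complex.arg z)/2, ?_⟩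
      rw [conj_apply]
      have hexp1 : Complex.exp (-(2*((-(Complex.arg z)/2 : ℝ):ℂ)*Complex.I)) = z := by
        rw [show -(2*((-(Complex.arg z)/2 : ℝ):ℂ)*Complex.I)
            = (Complex.arg z : ℂ) * Complex.I by push_cast; ring]
        exact hz1
      have hexp2 : Complex.exp (2*((-(Complex.arg z)/2 : ℝ):ℂ)*Complex.I)
          = starRingEnd ℂ z := by
        rw [show (2*((-(Complex.arg z)/2 : ℝ):ℂ)*Complex.I)
            = starRingEnd ℂ ((Complex.arg z : ℂ) * Complex.I) by
          rw [_root_.map_mul, Complex.conj_I, Complex.conj_ofReal]; push_cast; ring]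
        rw [Complex.exp_conj, hz1]
      ext i j
      fin_cases i <;> fin_cases j
      · simpa using ha
      · show Complex.exp (2*((-(Complex.arg z)/2 : ℝ):ℂ)*Complex.I) * M 0 1 = M' 0 1
        rw [hexp2, hb, hb', ← hz, _root_.map_mul]; ring
      · show Complex.exp (-(2*((-(Complex.arg z)/2 : ℝ):ℂ)*Complex.I)) * M 1 0 = M' 1 0
        rw [hexp1, hz]
      · show M 1 1 = M' 1 1
        rw [hd, hd', ha]
end
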